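/- (Radial Dyson lemma, 3D, delta case) Let v(r) ≥ 0 with v(r) = 0 for r > R₀, with scattering length a, and let μ > 0. For every R with R₀ ≤ R ≤ R₁ and every continuously differentiable function u : [0, R₁] → ℝ with u(0) = 0: ∫₀^{R₁} { μ[u'(r) - u(r)/r]² + (1/2)v(r)u(r)² } dr ≥ μ·a·u(R)²/R². -/

import Mathlib

/-- **Radial Dyson lemma, 3D, delta case**: let `v ≥ 0` vanish beyond `R₀` and have
scattering length `a` (defined via the zero-energy scattering solution `u₀`). Then for every
`R` with `R₀ ≤ R ≤ R₁` and every `C¹` function `u` on `[0, R₁]` with `u(0) = 0`: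
`∫₀^{R₁} {μ[u' - u/r]² + (1/2) v u²} dr ≥ μ a u(R)²/R²`. -/
theorem dyson_radial_3d (μ a R₀ R R₁ : ℝ) (hμ : 0 < μ) (hR₀ : 0 < R₀)
    (hR : R₀ ≤ R) (hR1 : R ≤ R₁)
    (v : ℝ → ℝ) (hv : Continuous v) (hvpos : ∀ r, 0 ≤ v r)
    (hvsupp : ∀ r, R₀ < r → v r = 0)
    (u₀ u₀' u₀'' : ℝ → ℝ)
    (hu₀ : ∀ r, HasDerivAt u₀ (u₀' r) r) (hu₀' : ∀ r, HasDerivAt u₀' (u₀'' r) r)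
    (heq : ∀ r, -2 * μ * u₀'' r + v r * u₀ r = 0)
    (h00 : u₀ 0 = 0) (hasym : ∀ r, R₀ < r → u₀ r = r - a)
    (u u' : ℝ → ℝ) (hu : ∀ r, HasDerivAt u (u' r) r) (hu'c : Continuous u')
    (hu0 : u 0 = 0) :
    μ * a * u R ^ 2 / R ^ 2 ≤
      ∫ r in (0:ℝ)..R₁, (μ * (u' r - u r / r) ^ 2 + (1 / 2) * v r * u r ^ 2) := by
  have hRpos : 0 < R := lt_of_lt_of_le hR₀ hR
  have hRne : R ≠ 0 := ne_of_gt hRpos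
  -- continuity facts
  have hucont : Continuous u := by
    rw [continuous_iff_continuousAt]; exact fun r => (hu r).continuousAt
  have hu₀cont : Continuous u₀ := by
    rw [continuous_iff_continuousAt]; exact fun r => (hu₀ r).continuousAt
  have hu₀'cont : Continuous u₀' := by
    rw [continuous_iff_continuousAt]; exact fun r => (hu₀' r).continuousAt
  -- boundary values at R
  have hid : ∀ r, R₀ < r → u₀' r = 1 := by
    intro r hr
    have h2 : HasDerivAt (fun x : ℝ => x - a) 1 r := (hasDerivAt_id r).sub_const a
    have h1 : HasDerivAt u₀ 1 r := by
      apply h2.congr_of_eventuallyEq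
      filter_upwards [Ioi_mem_nhds hr] with x hx
      exact hasym x hx
    exact (hu₀ r).unique h1
  have hlim : ∀ (f g : ℝ → ℝ), ContinuousAt f R → ContinuousAt g R →
      (∀ x ∈ Set.Ioi R, f x = g x) → f R = g R := by
    intro f g hf hg hfg
    have h1 : Filter.Tendsto f (nhdsWithin R (Set.Ioi R)) (nhds (f R)) :=
      (hf.tendsto).mono_left nhdsWithin_le_nhds
    have h2 : Filter.Tendsto f (nhdsWithin R (Set.Ioi R)) (nhds (g R)) := by
      refine ((hg.tendsto).mono_left nhdsWithin_le_nhds).congr' ?_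
      filter_upwards [self_mem_nhdsWithin] with x hx
      exact (hfg x hx).symm
    exact tendsto_nhds_unique h1 h2
  have hu₀R : u₀ R = R - a := by
    apply hlim u₀ (fun x => x - a) (hu₀cont.continuousAt) (by fun_prop)
    intro x hx; exact hasym x (lt_of_le_of_lt hR hx)
  have hu₀'R : u₀' R = 1 := by
    apply hlim u₀' (fun _ => 1) (hu₀'cont.continuousAt) (by fun_prop)
    intro x hx; exact hid x (lt_of_le_of_lt hR hx)
  -- rewrite second derivative
  have hu₀'' : ∀ r, u₀'' r = v r * u₀ r / (2 * μ) := by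
    intro r; have h := heq r; field_simp; linarith
  -- the auxiliary functions
  set t : ℝ := u R / R with ht
  set w : ℝ → ℝ := fun r => if r = 0 then u' 0 else u r / r with hw
  have hw0 : w 0 = u' 0 := by simp [hw]
  have hwne : ∀ r, r ≠ 0 → w r = u r / r := by intro r hr; simp [hw, hr]
  have hslope : Filter.Tendsto (fun r => u r / r) (nhdsWithin 0 {(0:ℝ)}ᶜ) (nhds (u' 0)) := by
    have h := hasDerivAt_iff_tendsto_slope.mp (hu 0)
    apply h.congr
    intro y; simp [slope_fun_def, hu0, div_eq_inv_mul]
  have hwcont : Continuous w := by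
    rw [continuous_iff_continuousAt]
    intro r
    by_cases hr : r = 0
    · subst hr
      rw [← continuousWithinAt_compl_self]
      rw [ContinuousWithinAt, hw0]
      apply hslope.congr'
      filter_upwards [self_mem_nhdsWithin] with x hx
      exact (hwne x hx).symm
    · have hc : ContinuousAt (fun x => u x / x) r := (hucont.continuousAt).div continuousAt_id hr
      apply hc.congr
      filter_upwards [isOpen_compl_singleton.mem_nhds hr] with x hx
      exact (hwne x hx).symm
  set φ : ℝ → ℝ := fun r =>
      2*μ*t*(u r * u₀' r) - t^2*μ*(u₀ r * u₀' r) + -(μ * u r^2 / r) with hφdef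
  set φd : ℝ → ℝ := fun r => 2*μ*t*(u' r * u₀' r) + t*(v r * u r * u₀ r)
      - t^2*μ*(u₀' r)^2 - t^2*(v r * (u₀ r)^2)/2 - 2*μ*(w r)*(u' r) + μ*(w r)^2 with hφddef
  have hμne : (μ:ℝ) ≠ 0 := ne_of_gt hμ
  have hφdcont : Continuous φd := by
    apply Continuous.add
    apply Continuous.sub
    apply Continuous.sub
    apply Continuous.sub
    all_goals fun_prop
  -- derivative of φ
  have hφderiv : ∀ r, HasDerivAt φ (φd r) r := by
    intro r
    have hF : HasDerivAt (fun r => 2*μ*t*(u r * u₀' r) - t^2*μ*(u₀ r * u₀' r))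
        (2*μ*t*(u' r * u₀' r + u r * u₀'' r) - t^2*μ*(u₀' r * u₀' r + u₀ r * u₀'' r)) r := by
      have h1 := ((hu r).mul (hu₀' r)).const_mul (2*μ*t)
      have h2 := ((hu₀ r).mul (hu₀' r)).const_mul (t^2*μ)
      exact h1.sub h2
    by_cases hr : r = 0
    · subst hr
      have hG : HasDerivAt (fun r => -(μ * u r^2 / r)) (-(μ * (u' 0)^2)) 0 := by
        rw [hasDerivAt_iff_tendsto_slope]
        have hc : Continuous fun y : ℝ => -(μ * y^2) := by fun_prop
        have h2 : Filter.Tendsto (fun r => -(μ * (u r / r)^2)) (nhdsWithin 0 {(0:ℝ)}ᶜ)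
            (nhds (-(μ * (u' 0)^2))) := (hc.tendsto _).comp hslope
        apply h2.congr'
        filter_upwards [self_mem_nhdsWithin] with x hx
        have hx' : (x:ℝ) ≠ 0 := hx
        simp only [slope_fun_def, hu0]
        rw [div_pow]
        field_simp
        rw [vsub_eq_sub, smul_eq_mul, sub_zero]
        field_simp
        ring
      refine (hF.add hG).congr_deriv ?_
      simp only [hφddef, hw0, hu₀'', h00, hu0]
      ring
    · have hG : HasDerivAt (fun s => -(μ * u s^2 / s))
          (-((μ * (2 * u r * u' r) * r - μ * u r^2 * 1)/ r^2)) r := by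
        have h1 : HasDerivAt (fun s => μ * u s^2) (μ * (2 * u r * u' r)) r := by
          have h2 := ((hu r).pow 2).const_mul μ
          exact h2.congr_deriv (by norm_num)
        exact (h1.div (hasDerivAt_id r) hr).neg
      refine (hF.add hG).congr_deriv ?_
      simp only [hφddef, hwne r hr, hu₀'']
      field_simp
      ring
  -- pointwise inequality
  have key : ∀ r, φd r ≤ μ * (u' r - w r)^2 + (1/2) * v r * u r^2 := by
    intro r
    have h1 : 0 ≤ μ * (u' r - t * u₀' r)^2 := mul_nonneg hμ.le (sq_nonneg _)
    have h2 : 0 ≤ v r * (u r - t * u₀ r)^2 := mul_nonneg (hvpos r) (sq_nonneg _)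
    simp only [hφddef]
    nlinarith [h1, h2]
  -- integrand equals continuous version a.e.
  have hIcont : Continuous (fun r => μ * (u' r - w r)^2 + (1/2) * v r * u r^2) := by fun_prop
  have hae : ∫ r in (0:ℝ)..R₁, (μ * (u' r - u r / r) ^ 2 + (1 / 2) * v r * u r ^ 2)
      = ∫ r in (0:ℝ)..R₁, (μ * (u' r - w r) ^ 2 + (1 / 2) * v r * u r ^ 2) := by
    apply intervalIntegral.integral_congr_ae
    have h0 : ∀ᵐ (x : ℝ), x ≠ (0:ℝ) := by
      refine (MeasureTheory.ae_iff).mpr ?_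
      simp [Real.volume_singleton]
    filter_upwards [h0] with x hx _
    rw [hwne x hx]
  rw [hae]
  -- split the integral
  have hInt1 : IntervalIntegrable (fun r => μ * (u' r - w r) ^ 2 + (1 / 2) * v r * u r ^ 2)
      MeasureTheory.volume 0 R := hIcont.intervalIntegrable _ _
  have hInt2 : IntervalIntegrable (fun r => μ * (u' r - w r) ^ 2 + (1 / 2) * v r * u r ^ 2)
      MeasureTheory.volume R R₁ := hIcont.intervalIntegrable _ _
  rw [← intervalIntegral.integral_add_adjacent_intervals hInt1 hInt2]
  have htail : 0 ≤ ∫ r in R..R₁, (μ * (u' r - w r) ^ 2 + (1 / 2) * v r * u r ^ 2) := by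
    apply intervalIntegral.integral_nonneg hR1
    intro x _
    have := mul_nonneg (hvpos x) (sq_nonneg (u x))
    nlinarith [mul_nonneg hμ.le (sq_nonneg (u' x - w x))]
  have hmain : μ * a * u R ^ 2 / R ^ 2 ≤
      ∫ r in (0:ℝ)..R, (μ * (u' r - w r) ^ 2 + (1 / 2) * v r * u r ^ 2) := by
    have hftc : ∫ r in (0:ℝ)..R, φd r = φ R - φ 0 :=
      intervalIntegral.integral_eq_sub_of_hasDerivAt (fun x _ => hφderiv x)
        (hφdcont.intervalIntegrable _ _)
    have hφ0 : φ 0 = 0 := by simp [hφdef, hu0, h00]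
    have hφR : φ R = μ * a * u R ^ 2 / R ^ 2 := by
      simp only [hφdef, hu₀R, hu₀'R, ht]
      field_simp
      ring
    have hmono : ∫ r in (0:ℝ)..R, φd r ≤
        ∫ r in (0:ℝ)..R, (μ * (u' r - w r) ^ 2 + (1 / 2) * v r * u r ^ 2) := by
      apply intervalIntegral.integral_mono_on hRpos.le (hφdcont.intervalIntegrable _ _) hInt1
      intro x _; exact key x
    rw [hftc, hφ0, hφR, sub_zero] at hmono
    exact hmono
  linarith
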